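/- Let V be a linear subspace of ℝⁿ and let S be a nonempty finite set of unit vectors in V such that (1/|S|)·Σ_{x∈S} x xᵀ ⪰ (1/(2·dim V))·P_V in the Loewner order, where P_V is the orthogonal projection onto V. Then for any unit vector w ∈ V, at least a 1/(4n) fraction of the points x ∈ S satisfy |w·x| ≥ 1/(2√n). -/

import Mathlib

open MeasureTheory Finset

open Classical in
theorem radial_isotropic_implies_margin {n : ℕ} (hn : 0 < n)
    (V : Submodule ℝ (EuclideanSpace ℝ (Fin n)))
    (S : Finset (EuclideanSpace ℝ (Fin n))) (hS : S.Nonempty)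
    (hSV : ∀ x ∈ S, x ∈ V) (hunit : ∀ x ∈ S, ‖x‖ = 1)
    (hiso : ∀ w : EuclideanSpace ℝ (Fin n),
      (1 / (2 * (Module.finrank ℝ V : ℝ))) *
          ‖(V.orthogonalProjectionOnto w : EuclideanSpace ℝ (Fin n))‖ ^ 2
        ≤ (1 / (S.card : ℝ)) * ∑ x ∈ S, (inner ℝ w x : ℝ) ^ 2)
    (w : EuclideanSpace ℝ (Fin n)) (hwV : w ∈ V) (hw : ‖w‖ = 1) :
    (S.card : ℝ) / (4 * n) ≤
      ((S.filter fun x => 1 / (2 * Real.sqrt n) ≤ |(inner ℝ w x : ℝ)|).card : ℝ) := by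
  have hnR : (0:ℝ) < n := by exact_mod_cast hn
  have hsqrt : (0:ℝ) < Real.sqrt n := Real.sqrt_pos.2 hnR
  have hsq : (Real.sqrt n) ^ 2 = (n:ℝ) := Real.sq_sqrt hnR.le
  have hscard : (0:ℝ) < (S.card : ℝ) := by exact_mod_cast hS.card_pos
  -- dimension bounds
  have hw0 : w ≠ 0 := by intro h; rw [h] at hw; simp at hw
  have hdpos : 0 < Module.finrank ℝ V :=
    Module.finrank_pos_iff_exists_ne_zero.2
      ⟨⟨w, hwV⟩, by simpa [Submodule.coe_eq_zero] using hw0⟩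
  have hdposR : (0:ℝ) < (Module.finrank ℝ V : ℝ) := by exact_mod_cast hdpos
  have hdn : ((Module.finrank ℝ V : ℝ)) ≤ n := by
    have := V.finrank_le
    rw [finrank_euclideanSpace_fin] at this
    exact_mod_cast this
  -- projection of w is w
  have hproj : ‖(V.orthogonalProjectionOnto w : EuclideanSpace ℝ (Fin n))‖ = 1 := by
    rw [show (V.orthogonalProjectionOnto w : EuclideanSpace ℝ (Fin n)) = w from V.starProjection_eq_self_iff.2 hwV, hw]
  -- lower bound on the sum
  have h1 : (S.card : ℝ) / (2 * n) ≤ ∑ x ∈ S, (inner ℝ w x : ℝ) ^ 2 := by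
    have := hiso w
    rw [hproj] at this
    have h2 : (S.card : ℝ) / (2 * (Module.finrank ℝ V : ℝ)) ≤ ∑ x ∈ S, (inner ℝ w x : ℝ) ^ 2 := by
      calc (S.card : ℝ) / (2 * (Module.finrank ℝ V : ℝ))
          = (S.card : ℝ) * ((1 / (2 * (Module.finrank ℝ V : ℝ))) * 1 ^ 2) := by
            field_simp
        _ ≤ (S.card : ℝ) * ((1 / (S.card : ℝ)) * ∑ x ∈ S, (inner ℝ w x : ℝ) ^ 2) := by
            exact mul_le_mul_of_nonneg_left this hscard.le
        _ = ∑ x ∈ S, (inner ℝ w x : ℝ) ^ 2 := by field_simp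
    refine le_trans ?_ h2
    apply div_le_div_of_nonneg_left hscard.le (by positivity)
    nlinarith
  -- upper bound on the sum
  set T := S.filter fun x => 1 / (2 * Real.sqrt n) ≤ |(inner ℝ w x : ℝ)|
  have hterm1 : ∀ x ∈ S, (inner ℝ w x : ℝ) ^ 2 ≤ 1 := by
    intro x hx
    have h := abs_real_inner_le_norm w x
    rw [hw, hunit x hx] at h
    nlinarith [abs_nonneg (inner ℝ w x : ℝ), sq_abs (inner ℝ w x : ℝ)]
  have hterm2 : ∀ x ∈ S.filter (fun x => ¬ (1 / (2 * Real.sqrt n) ≤ |(inner ℝ w x : ℝ)|)),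
      (inner ℝ w x : ℝ) ^ 2 ≤ 1 / (4 * n) := by
    intro x hx
    rw [Finset.mem_filter] at hx
    have h := le_of_not_ge hx.2
    have h2 : (inner ℝ w x : ℝ) ^ 2 ≤ (1 / (2 * Real.sqrt n)) ^ 2 := by
      rw [← sq_abs]
      exact pow_le_pow_left₀ (abs_nonneg _) h 2
    calc (inner ℝ w x : ℝ) ^ 2 ≤ (1 / (2 * Real.sqrt n)) ^ 2 := h2
      _ = 1 / (4 * n) := by rw [div_pow, mul_pow, hsq]; norm_num
  have hsplit : ∑ x ∈ S, (inner ℝ w x : ℝ) ^ 2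
      ≤ (T.card : ℝ) + (S.card : ℝ) * (1 / (4 * n)) := by
    rw [← Finset.sum_filter_add_sum_filter_not S
      (fun x => 1 / (2 * Real.sqrt n) ≤ |(inner ℝ w x : ℝ)|)]
    have hA : ∑ x ∈ T, (inner ℝ w x : ℝ) ^ 2 ≤ (T.card : ℝ) := by
      calc ∑ x ∈ T, (inner ℝ w x : ℝ) ^ 2 ≤ ∑ x ∈ T, (1:ℝ) :=
        Finset.sum_le_sum fun x hx => hterm1 x (Finset.mem_of_mem_filter x hx)
        _ = (T.card : ℝ) := by simp
    have hB : ∑ x ∈ S.filter (fun x => ¬ (1 / (2 * Real.sqrt n) ≤ |(inner ℝ w x : ℝ)|)),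
        (inner ℝ w x : ℝ) ^ 2 ≤ (S.card : ℝ) * (1 / (4 * n)) := by
      calc ∑ x ∈ S.filter (fun x => ¬ (1 / (2 * Real.sqrt n) ≤ |(inner ℝ w x : ℝ)|)),
          (inner ℝ w x : ℝ) ^ 2
          ≤ ∑ _x ∈ S.filter (fun x => ¬ (1 / (2 * Real.sqrt n) ≤ |(inner ℝ w x : ℝ)|)),
            (1 / (4 * n) : ℝ) := Finset.sum_le_sum hterm2
        _ = ((S.filter (fun x => ¬ (1 / (2 * Real.sqrt n) ≤ |(inner ℝ w x : ℝ)|))).card : ℝ)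
            * (1 / (4 * n)) := by simp [mul_comm]
        _ ≤ (S.card : ℝ) * (1 / (4 * n)) := by
            have : ((S.filter (fun x => ¬ (1 / (2 * Real.sqrt n) ≤ |(inner ℝ w x : ℝ)|))).card : ℝ)
                ≤ (S.card : ℝ) := by exact_mod_cast Finset.card_filter_le _ _
            exact mul_le_mul_of_nonneg_right this (by positivity)
    linarith
  have key : (S.card : ℝ) / (2 * n) ≤ (T.card : ℝ) + (S.card : ℝ) * (1 / (4 * n)) :=
    le_trans h1 hsplit
  have : (S.card : ℝ) / (4 * n) = (S.card : ℝ) / (2 * n) - (S.card : ℝ) * (1 / (4 * n)) := by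
    field_simp; ring
  linarith
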